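/- The temperature-τ softmax map σ_τ : ℝ^m → ℝ^m, defined by σ_τ(u)_i = exp(u_i/τ) / Σ_j exp(u_j/τ), is Lipschitz with constant 1/(2τ) with respect to the ℓ∞ norm: for all u, v ∈ ℝ^m, ‖σ_τ(u) − σ_τ(v)‖_∞ ≤ (1/(2τ))·‖u − v‖_∞. -/

import Mathlib

open Real Finset

/-- Temperature-τ softmax. -/
noncomputable def softmaxT {m : ℕ} (τ : ℝ) (u : Fin m → ℝ) : Fin m → ℝ :=
  fun i => Real.exp (u i / τ) / ∑ j, Real.exp (u j / τ)

/-- Key algebraic inequality. -/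
lemma softmax_key (a A B C D : ℝ) (ha : 1 ≤ a) (hA : 0 < A) (hC : 0 < C)
    (hB : 0 ≤ B) (hD : 0 ≤ D)
    (hAC : A ≤ a * C) (hCA : C ≤ a * A) (hBD : B ≤ a * D) (hDB : D ≤ a * B) :
    (a + 1) * (A * D - B * C) ≤ (a - 1) * (A + B) * (C + D) := by
  have h0 : (0:ℝ) < a := by linarith
  have ha1 : (0:ℝ) ≤ a - 1 := by linarith
  have h3 : 0 ≤ (a * B - D) * (2 * a * C + (a - 1) * D) :=
    mul_nonneg (by linarith) (by nlinarith)
  have hmain : 0 ≤ a * ((a - 1) * (A + B) * (C + D) - (a + 1) * (A * D - B * C)) := by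
    rcases le_or_gt (2 * D) ((a - 1) * C) with h | h
    · have h1 : 0 ≤ (a - 1) * (C + D) ^ 2 := mul_nonneg ha1 (sq_nonneg _)
      have h2 : 0 ≤ (a * A - C) * ((a - 1) * C - 2 * D) :=
        mul_nonneg (by linarith) (by linarith)
      nlinarith [h1, h2, h3]
    · have h1 : 0 ≤ (a - 1) * (a * C - D) ^ 2 := mul_nonneg ha1 (sq_nonneg _)
      have h2 : 0 ≤ a * (a * C - A) * (2 * D - (a - 1) * C) :=
        mul_nonneg (mul_nonneg h0.le (by linarith)) (by linarith)
      nlinarith [h1, h2, h3]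
  nlinarith [hmain]

/-- tanh-type bound: 2(e^d - 1) ≤ d(e^d + 1) for d ≥ 0. -/
lemma tanh_type (d : ℝ) (hd : 0 ≤ d) : 2 * (Real.exp d - 1) ≤ d * (Real.exp d + 1) := by
  set f : ℝ → ℝ := fun x => x * (Real.exp x + 1) - 2 * (Real.exp x - 1) with hf
  have hderiv : ∀ x : ℝ, HasDerivAt f (1 + (x - 1) * Real.exp x) x := by
    intro x
    have h1 : HasDerivAt (fun x : ℝ => x * (Real.exp x + 1))
        (1 * (Real.exp x + 1) + x * Real.exp x) x :=
      (hasDerivAt_id x).mul ((Real.hasDerivAt_exp x).add_const 1)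
    have h2 : HasDerivAt (fun x : ℝ => 2 * (Real.exp x - 1)) (2 * Real.exp x) x := by
      simpa using (((Real.hasDerivAt_exp x).sub_const 1).const_mul 2)
    have := h1.sub h2
    refine this.congr_deriv ?_
    ring
  have hmono : MonotoneOn f (Set.Ici (0:ℝ)) := by
    apply monotoneOn_of_deriv_nonneg (convex_Ici 0)
    · exact Continuous.continuousOn (by continuity)
    · intro x _
      exact ((hderiv x).differentiableAt).differentiableWithinAt
    · intro x _
      rw [(hderiv x).deriv]
      rcases le_or_gt 1 x with h | h
      · have : 0 ≤ (x - 1) * Real.exp x := mul_nonneg (by linarith) (Real.exp_pos x).le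
        linarith
      · have h1 : 1 - x ≤ Real.exp (-x) := Real.one_sub_le_exp_neg x
        have h2 : (1 - x) * Real.exp x ≤ Real.exp (-x) * Real.exp x :=
          mul_le_mul_of_nonneg_right h1 (Real.exp_pos x).le
        rw [← Real.exp_add, neg_add_cancel, Real.exp_zero] at h2
        nlinarith [h2]
  have h0 : f 0 ≤ f d := hmono Set.self_mem_Ici hd hd
  simp only [hf, Real.exp_zero] at h0
  nlinarith [h0]

/-- One-sided component bound. -/
lemma softmax_comp (m : ℕ) (τ : ℝ) (hτ : 0 < τ) (u v : Fin m → ℝ) (i : Fin m) :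
    softmaxT τ u i - softmaxT τ v i ≤ (1 / (2 * τ)) * ‖u - v‖ := by
  set d : ℝ := ‖u - v‖ / τ with hdd
  have hnorm : 0 ≤ ‖u - v‖ := norm_nonneg _
  have hd : 0 ≤ d := div_nonneg hnorm hτ.le
  set a : ℝ := Real.exp d with haa
  have ha : 1 ≤ a := Real.one_le_exp hd
  have hbound : ∀ j, u j / τ ≤ v j / τ + d ∧ v j / τ ≤ u j / τ + d := by
    intro j
    have hj : |u j - v j| ≤ ‖u - v‖ := by
      simpa [Real.norm_eq_abs] using norm_le_pi_norm (u - v) j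
    rw [abs_le] at hj
    constructor
    · rw [hdd, ← add_div]
      exact (div_le_div_iff_of_pos_right hτ).2 (by linarith)
    · rw [hdd, ← add_div]
      exact (div_le_div_iff_of_pos_right hτ).2 (by linarith)
  have hexp : ∀ j, Real.exp (u j / τ) ≤ a * Real.exp (v j / τ) ∧
      Real.exp (v j / τ) ≤ a * Real.exp (u j / τ) := by
    intro j
    constructor
    · calc Real.exp (u j / τ) ≤ Real.exp (v j / τ + d) :=
            Real.exp_le_exp.2 (hbound j).1
        _ = a * Real.exp (v j / τ) := by rw [Real.exp_add, haa, mul_comm]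
    · calc Real.exp (v j / τ) ≤ Real.exp (u j / τ + d) :=
            Real.exp_le_exp.2 (hbound j).2
        _ = a * Real.exp (u j / τ) := by rw [Real.exp_add, haa, mul_comm]
  set A : ℝ := Real.exp (u i / τ) with hAdef
  set C : ℝ := Real.exp (v i / τ) with hCdef
  set B : ℝ := ∑ j ∈ Finset.univ.erase i, Real.exp (u j / τ) with hBdef
  set D : ℝ := ∑ j ∈ Finset.univ.erase i, Real.exp (v j / τ) with hDdef
  have hSu : ∑ j, Real.exp (u j / τ) = A + B := by
    rw [hAdef, hBdef]
    exact (Finset.add_sum_erase _ (fun j => Real.exp (u j / τ)) (Finset.mem_univ i)).symm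
  have hSv : ∑ j, Real.exp (v j / τ) = C + D := by
    rw [hCdef, hDdef]
    exact (Finset.add_sum_erase _ (fun j => Real.exp (v j / τ)) (Finset.mem_univ i)).symm
  have hA : 0 < A := Real.exp_pos _
  have hC : 0 < C := Real.exp_pos _
  have hB : 0 ≤ B := Finset.sum_nonneg fun j _ => (Real.exp_pos _).le
  have hD : 0 ≤ D := Finset.sum_nonneg fun j _ => (Real.exp_pos _).le
  have hAC : A ≤ a * C := (hexp i).1
  have hCA : C ≤ a * A := (hexp i).2
  have hBD : B ≤ a * D := by
    rw [hBdef, hDdef, Finset.mul_sum]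
    exact Finset.sum_le_sum fun j _ => (hexp j).1
  have hDB : D ≤ a * B := by
    rw [hDdef, hBdef, Finset.mul_sum]
    exact Finset.sum_le_sum fun j _ => (hexp j).2
  have hkey := softmax_key a A B C D ha hA hC hB hD hAC hCA hBD hDB
  have hAB : 0 < A + B := by linarith
  have hCD : 0 < C + D := by linarith
  have ha1 : (0:ℝ) < a + 1 := by linarith
  have step1 : softmaxT τ u i - softmaxT τ v i ≤ (a - 1) / (a + 1) := by
    show A / (∑ j, Real.exp (u j / τ)) - C / (∑ j, Real.exp (v j / τ)) ≤ (a - 1) / (a + 1)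
    rw [hSu, hSv, div_sub_div _ _ hAB.ne' hCD.ne', div_le_div_iff₀ (mul_pos hAB hCD) ha1]
    nlinarith [hkey]
  have step2 : (a - 1) / (a + 1) ≤ d / 2 := by
    rw [div_le_div_iff₀ ha1 (by norm_num : (0:ℝ) < 2)]
    nlinarith [tanh_type d hd]
  have step3 : d / 2 = (1 / (2 * τ)) * ‖u - v‖ := by
    rw [hdd]; ring
  linarith [step1, step2]

/-- The temperature-τ softmax is `1/(2τ)`-Lipschitz in the ℓ∞ norm. -/
theorem stmt_1 (m : ℕ) (hm : 1 ≤ m) (τ : ℝ) (hτ : 0 < τ) (u v : Fin m → ℝ) :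
    ‖softmaxT τ u - softmaxT τ v‖ ≤ (1 / (2 * τ)) * ‖u - v‖ := by
  have hR : 0 ≤ (1 / (2 * τ)) * ‖u - v‖ := by positivity
  rw [pi_norm_le_iff_of_nonneg hR]
  intro i
  rw [Pi.sub_apply, Real.norm_eq_abs, abs_sub_le_iff]
  constructor
  · exact softmax_comp m τ hτ u v i
  · have := softmax_comp m τ hτ v u i
    rwa [norm_sub_rev] at this
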